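/- For every k ≥ 1, 1/2 + (k/√(4k²-1))·coth((k/2)·√((2k+1)/(2k-1))) > 1, and this quantity tends to 1 as k → ∞. -/

import Mathlib

/-- `c(k) = 1/2 + (k/√(4k²-1))·coth((k/2)·√((2k+1)/(2k-1)))`. -/
noncomputable def propBound' (k : ℕ) : ℝ :=
  1 / 2 + (k : ℝ) / Real.sqrt (4 * (k : ℝ) ^ 2 - 1) *
    (Real.cosh ((k : ℝ) / 2 * Real.sqrt ((2 * (k : ℝ) + 1) / (2 * (k : ℝ) - 1))) /
     Real.sinh ((k : ℝ) / 2 * Real.sqrt ((2 * (k : ℝ) + 1) / (2 * (k : ℝ) - 1))))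

open Real Filter

lemma coth_tendsto_one : Tendsto (fun x : ℝ => Real.cosh x / Real.sinh x) atTop (nhds 1) := by
  have h0 : Tendsto (fun x : ℝ => Real.exp (-(2*x))) atTop (nhds 0) := by
    apply Real.tendsto_exp_atBot.comp
    exact tendsto_neg_atBot_iff.mpr (tendsto_id.const_mul_atTop two_pos)
  have h1 : Tendsto (fun x : ℝ => (1 + Real.exp (-(2*x)))/(1 - Real.exp (-(2*x))))
      atTop (nhds 1) := by
    have := (((tendsto_const_nhds : Tendsto (fun _:ℝ => (1:ℝ)) atTop (nhds 1))).add h0).div (tendsto_const_nhds.sub h0)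
      (by norm_num : (1:ℝ) - 0 ≠ 0)
    simp only [add_zero, sub_zero, div_one] at this
    exact this
  apply h1.congr'
  filter_upwards [eventually_gt_atTop (0:ℝ)] with x hx
  have he : Real.exp x ≠ 0 := (Real.exp_pos x).ne'
  have hlt : Real.exp (-x) < Real.exp x := Real.exp_lt_exp.mpr (by linarith)
  have h2 : Real.exp (-(2*x)) = Real.exp (-x) * Real.exp (-x) := by
    rw [← Real.exp_add]; ring_nf
  have hne : (1:ℝ) - Real.exp (-(2*x)) ≠ 0 := by
    have : Real.exp (-(2*x)) < 1 := by
      rw [← Real.exp_zero]; exact Real.exp_lt_exp.mpr (by linarith)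
    linarith
  have hs : Real.sinh x ≠ 0 := (Real.sinh_pos_iff.mpr hx).ne'
  rw [Real.cosh_eq, Real.sinh_eq]
  rw [Real.sinh_eq] at hs
  field_simp [h2, Real.exp_neg] at *
  rw [h2, eq_div_iff (sub_ne_zero.mpr hlt.ne'), Real.exp_neg]
  field_simp

lemma f_tendsto : Tendsto (fun k : ℕ => (k:ℝ) / Real.sqrt (4 * (k:ℝ)^2 - 1))
    atTop (nhds (1/2)) := by
  have h : Tendsto (fun k : ℕ => (1:ℝ)/(k:ℝ)^2) atTop (nhds 0) := by
    have hp : Tendsto (fun x:ℝ => x^2) atTop atTop := tendsto_pow_atTop (by norm_num)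
    have hc : Tendsto (fun k:ℕ => ((k:ℝ))^2) atTop atTop :=
      hp.comp tendsto_natCast_atTop_atTop
    simp only [one_div]
    exact hc.inv_tendsto_atTop
  have h4 : Tendsto (fun k : ℕ => (4:ℝ) - 1/(k:ℝ)^2) atTop (nhds 4) := by
    simpa using (tendsto_const_nhds (x := (4:ℝ)) (f := atTop)).sub h
  have hsq : Tendsto (fun k : ℕ => Real.sqrt (4 - 1/(k:ℝ)^2)) atTop (nhds 2) := by
    have h2 := (Real.continuous_sqrt.tendsto 4).comp h4
    have h5 : Real.sqrt 4 = 2 := by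
      rw [show (4:ℝ) = 2^2 by norm_num, Real.sqrt_sq (by norm_num : (0:ℝ) ≤ 2)]
    rw [h5] at h2
    exact h2
  have hinv : Tendsto (fun k : ℕ => 1 / Real.sqrt (4 - 1/(k:ℝ)^2)) atTop (nhds (1/2)) := by
    simpa using hsq.inv₀ (by norm_num)
  apply hinv.congr'
  filter_upwards [eventually_ge_atTop 1] with k hk
  have hk0 : (0:ℝ) < (k:ℝ) := by exact_mod_cast hk
  have heq : 4 * (k:ℝ)^2 - 1 = (k:ℝ)^2 * (4 - 1/(k:ℝ)^2) := by
    field_simp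
  rw [heq, Real.sqrt_mul (by positivity), Real.sqrt_sq hk0.le]
  rw [div_mul_eq_div_div]
  rw [div_self hk0.ne']

lemma x_tendsto : Tendsto (fun k : ℕ => (k:ℝ)/2 * Real.sqrt ((2*(k:ℝ)+1)/(2*(k:ℝ)-1)))
    atTop atTop := by
  apply tendsto_atTop_mono' _ _ (tendsto_natCast_atTop_atTop (R := ℝ).atTop_div_const two_pos)
  filter_upwards [eventually_ge_atTop 1] with k hk
  have hk0 : (1:ℝ) ≤ (k:ℝ) := by exact_mod_cast hk
  have hden : (0:ℝ) < 2*(k:ℝ)-1 := by linarith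
  have harg : (1:ℝ) ≤ (2*(k:ℝ)+1)/(2*(k:ℝ)-1) := by
    rw [le_div_iff₀ hden]; linarith
  have hs : (1:ℝ) ≤ Real.sqrt ((2*(k:ℝ)+1)/(2*(k:ℝ)-1)) := by
    have := Real.sqrt_le_sqrt harg
    rwa [Real.sqrt_one] at this
  nlinarith [hs, hk0]

/-- For every `k ≥ 1` the quantity `c(k)` exceeds `1`, and `c(k) → 1` as `k → ∞`. -/
theorem stmt_8 :
    (∀ k : ℕ, 1 ≤ k → 1 < propBound' k) ∧
      Filter.Tendsto propBound' Filter.atTop (nhds 1) := by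
  constructor
  · intro k hk
    have hk0 : (1:ℝ) ≤ (k:ℝ) := by exact_mod_cast hk
    have hden : (0:ℝ) < 2*(k:ℝ)-1 := by linarith
    have hx : 0 < (k:ℝ)/2 * Real.sqrt ((2*(k:ℝ)+1)/(2*(k:ℝ)-1)) := by
      apply mul_pos (by linarith)
      exact Real.sqrt_pos.mpr (by positivity)
    set x := (k:ℝ)/2 * Real.sqrt ((2*(k:ℝ)+1)/(2*(k:ℝ)-1)) with hxdef
    have hcoth : 1 < Real.cosh x / Real.sinh x := by
      rw [lt_div_iff₀ (Real.sinh_pos_iff.mpr hx), one_mul]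
      exact Real.sinh_lt_cosh x
    have hsqpos : (0:ℝ) < Real.sqrt (4*(k:ℝ)^2-1) := Real.sqrt_pos.mpr (by nlinarith)
    have hfrac : (1:ℝ)/2 < (k:ℝ)/Real.sqrt (4*(k:ℝ)^2-1) := by
      rw [div_lt_div_iff₀ (by norm_num) hsqpos]
      nlinarith [Real.sq_sqrt (show (0:ℝ) ≤ 4*(k:ℝ)^2-1 by nlinarith),
        Real.sqrt_nonneg (4*(k:ℝ)^2-1)]
    unfold propBound'
    have : (1:ℝ)/2 * 1 < (k:ℝ)/Real.sqrt (4*(k:ℝ)^2-1) * (Real.cosh x / Real.sinh x) :=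
      mul_lt_mul'' hfrac hcoth (by norm_num) (by norm_num)
    simp only [hxdef] at this
    linarith
  · have := ((tendsto_const_nhds (x := (1/2:ℝ)) (f := atTop)).add
      (f_tendsto.mul (coth_tendsto_one.comp x_tendsto)))
    have h1 : (1/2 : ℝ) + 1/2 * 1 = 1 := by norm_num
    rw [h1] at this
    apply this.congr
    intro k
    simp [propBound', Function.comp]
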